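/- Let T be a bounded linear operator on a Banach space X with ‖T‖ ≤ 1, and P a projection with TP = PT. If δ_P(T^{n0}) < 1 for some n0 ∈ ℕ, then ‖T^n(I − P)‖ → 0 as n → ∞. -/

import Mathlib

open Filter Topology

noncomputable def dobrushin {X : Type*} [NormedAddCommGroup X] [NormedSpace ℝ X]
    (P A : X →L[ℝ] X) : ℝ :=
  sSup {r : ℝ | ∃ x : X, P x = 0 ∧ x ≠ 0 ∧ r = ‖A x‖ / ‖x‖}

theorem stmt5 {X : Type*} [NormedAddCommGroup X] [NormedSpace ℝ X] [CompleteSpace X]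
    (P T : X →L[ℝ] X) (hP : P * P = P) (hT : ‖T‖ ≤ 1) (hcomm : T * P = P * T)
    (n0 : ℕ) (hdelta : dobrushin P (T ^ n0) < 1) :
    Tendsto (fun n : ℕ => ‖T ^ n * (1 - P)‖) atTop (𝓝 0) := by
  set δ := dobrushin P (T ^ n0) with hδdef
  -- nonnegativity of δ
  have hδ0 : 0 ≤ δ := by
    apply Real.sSup_nonneg
    rintro r ⟨x, _, hx0, rfl⟩
    positivity
  -- bounded above
  have hbdd : BddAbove {r : ℝ | ∃ x : X, P x = 0 ∧ x ≠ 0 ∧ r = ‖(T ^ n0) x‖ / ‖x‖} := by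
    refine ⟨‖T ^ n0‖, ?_⟩
    rintro r ⟨x, _, hx0, rfl⟩
    rw [div_le_iff₀ (norm_pos_iff.2 hx0)]
    exact (T ^ n0).le_opNorm x
  -- key contraction on ker P
  have hkey : ∀ x : X, P x = 0 → ‖(T ^ n0) x‖ ≤ δ * ‖x‖ := by
    intro x hx
    rcases eq_or_ne x 0 with rfl | hx0
    · simp [mul_nonneg hδ0]
    · have hmem : ‖(T ^ n0) x‖ / ‖x‖ ∈
          {r : ℝ | ∃ x : X, P x = 0 ∧ x ≠ 0 ∧ r = ‖(T ^ n0) x‖ / ‖x‖} :=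
        ⟨x, hx, hx0, rfl⟩
      have := le_csSup hbdd hmem
      rw [div_le_iff₀ (norm_pos_iff.2 hx0)] at this
      exact this
  have hTk : ∀ k : ℕ, ‖T ^ k‖ ≤ 1 := by
    intro k
    induction k with
    | zero => rw [pow_zero]; exact ContinuousLinearMap.norm_id_le
    | succ k ih =>
      calc ‖T ^ (k + 1)‖ = ‖T ^ k * T‖ := by rw [pow_succ]
      _ ≤ ‖T ^ k‖ * ‖T‖ := norm_mul_le _ _
      _ ≤ 1 * 1 := mul_le_mul ih hT (norm_nonneg _) zero_le_one
      _ = 1 := one_mul 1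
  -- (1 - P) x ∈ ker P
  have hker : ∀ x : X, P ((1 - P) x) = 0 := by
    intro x
    have : P * (1 - P) = 0 := by rw [mul_sub, mul_one, hP, sub_self]
    calc P ((1 - P) x) = (P * (1 - P)) x := rfl
    _ = 0 := by rw [this]; rfl
  -- T^k preserves ker P
  have hTker : ∀ (k : ℕ) (x : X), P x = 0 → P ((T ^ k) x) = 0 := by
    intro k x hx
    have hcTP : Commute T P := hcomm
    have hc : P * T ^ k = T ^ k * P := ((hcTP.pow_left k)).symm.eq
    calc P ((T ^ k) x) = (P * T ^ k) x := rfl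
    _ = (T ^ k) (P x) := by rw [hc]; rfl
    _ = 0 := by rw [hx, map_zero]
  -- iterate
  have hiter : ∀ (q : ℕ) (x : X), P x = 0 → ‖((T ^ n0) ^ q) x‖ ≤ δ ^ q * ‖x‖ := by
    intro q
    induction q with
    | zero => intro x _; simp
    | succ q ih =>
      intro x hx
      have h1 : ((T ^ n0) ^ (q + 1)) x = (T ^ n0) (((T ^ n0) ^ q) x) := by
        rw [pow_succ']; rfl
      have hq : P (((T ^ n0) ^ q) x) = 0 := by
        rw [← pow_mul]; exact hTker _ x hx
      calc ‖((T ^ n0) ^ (q + 1)) x‖ = ‖(T ^ n0) (((T ^ n0) ^ q) x)‖ := by rw [h1]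
      _ ≤ δ * ‖((T ^ n0) ^ q) x‖ := hkey _ hq
      _ ≤ δ * (δ ^ q * ‖x‖) := by
          exact mul_le_mul_of_nonneg_left (ih x hx) hδ0
      _ = δ ^ (q + 1) * ‖x‖ := by ring
  rcases Nat.eq_zero_or_pos n0 with rfl | hn0
  · -- n0 = 0 : ker P = 0 so 1 - P = 0
    have hP0 : ∀ x : X, (1 - P) x = 0 := by
      intro x
      have := hkey ((1 - P) x) (hker x)
      simp only [pow_zero] at this
      by_contra h
      have hpos : (0 : ℝ) < ‖(1 - P) x‖ := norm_pos_iff.2 h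
      have : ‖(1 - P) x‖ ≤ δ * ‖(1 - P) x‖ := by simpa using this
      nlinarith
    have : ∀ n : ℕ, ‖T ^ n * (1 - P)‖ = 0 := by
      intro n
      rw [norm_eq_zero]
      ext x
      simp [ContinuousLinearMap.mul_apply, hP0 x]
    simp [this]
  · -- main case
    have hbound : ∀ n : ℕ, ‖T ^ n * (1 - P)‖ ≤ δ ^ (n / n0) * ‖(1 : X →L[ℝ] X) - P‖ := by
      intro n
      apply ContinuousLinearMap.opNorm_le_bound
      · positivity
      intro x
      have hdecomp : T ^ n = T ^ (n % n0) * (T ^ n0) ^ (n / n0) := by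
        rw [← pow_mul, ← pow_add, Nat.mod_add_div]
      have h1 : (T ^ n * (1 - P)) x = (T ^ (n % n0)) (((T ^ n0) ^ (n / n0)) ((1 - P) x)) := by
        rw [hdecomp]; rfl
      calc ‖(T ^ n * (1 - P)) x‖
          = ‖(T ^ (n % n0)) (((T ^ n0) ^ (n / n0)) ((1 - P) x))‖ := by rw [h1]
      _ ≤ ‖T ^ (n % n0)‖ * ‖((T ^ n0) ^ (n / n0)) ((1 - P) x)‖ :=
          (T ^ (n % n0)).le_opNorm _
      _ ≤ 1 * ‖((T ^ n0) ^ (n / n0)) ((1 - P) x)‖ :=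
          mul_le_mul_of_nonneg_right (hTk _) (norm_nonneg _)
      _ = ‖((T ^ n0) ^ (n / n0)) ((1 - P) x)‖ := one_mul _
      _ ≤ δ ^ (n / n0) * ‖(1 - P) x‖ := hiter _ _ (hker x)
      _ ≤ δ ^ (n / n0) * (‖(1 : X →L[ℝ] X) - P‖ * ‖x‖) := by
          exact mul_le_mul_of_nonneg_left ((1 - P).le_opNorm x) (by positivity)
      _ = δ ^ (n / n0) * ‖(1 : X →L[ℝ] X) - P‖ * ‖x‖ := by ring
    have hdiv : Tendsto (fun n : ℕ => n / n0) atTop atTop := by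
      apply tendsto_atTop_atTop.2
      intro b
      exact ⟨b * n0, fun a ha => (Nat.le_div_iff_mul_le hn0).2 ha⟩
    have hpow : Tendsto (fun n : ℕ => δ ^ (n / n0) * ‖(1 : X →L[ℝ] X) - P‖) atTop (𝓝 0) := by
      have h1 : Tendsto (fun q : ℕ => δ ^ q) atTop (𝓝 0) :=
        tendsto_pow_atTop_nhds_zero_of_lt_one hδ0 hdelta
      have := (h1.comp hdiv).mul_const ‖(1 : X →L[ℝ] X) - P‖
      simpa using this
    exact squeeze_zero (fun n => norm_nonneg _) hbound hpow
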